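/- arXiv:1508.03949 — 2 statements merged into one kernel-verified Lean document; each statement's English description precedes it below -/
import Mathlib

section
/- Let (A_n) be a sequence of symmetric real n×n matrices satisfying the mean-field assumption. Then for every ε > 0 there exists a sequence of finite sets D_n(ε) ⊂ ℝ^n such that: (i) for every v ∈ [0,1]^n there exists w ∈ D_n(ε) with ‖A_n v − w‖₂ ≤ √n·ε (D_n(ε) is a √n·ε-net of {A_n v : v ∈ [0,1]^n} in Euclidean norm), and (ii) (1/n)·log |D_n(ε)| → 0 as n → ∞. -/
open Finset Filter Real

section aux
open MeasureTheory Metric Finset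

variable {ι : Type*} [Fintype ι] [DecidableEq ι]

noncomputable def diagMap (c : ι → ℝ) : EuclideanSpace ℝ ι →ₗ[ℝ] EuclideanSpace ℝ ι where
  toFun x := WithLp.toLp 2 (fun i => c i * x i)
  map_add' x y := by ext i; simp [PiLp.add_apply, mul_add]
  map_smul' r x := by ext i; simp [PiLp.smul_apply, smul_eq_mul]; ring

lemma diagMap_det (c : ι → ℝ) : LinearMap.det (diagMap c) = ∏ i, c i := by
  classical
  rw [← LinearMap.det_toMatrix (PiLp.basisFun 2 ℝ ι)]
  have : (LinearMap.toMatrix (PiLp.basisFun 2 ℝ ι) (PiLp.basisFun 2 ℝ ι)) (diagMap c)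
      = Matrix.diagonal c := by
    ext i j
    rw [LinearMap.toMatrix_apply]
    simp [diagMap, PiLp.basisFun_apply, Matrix.diagonal_apply, Pi.single_apply]
  rw [this, Matrix.det_diagonal]

omit [DecidableEq ι] in
lemma eucl_dist_sq (x y : EuclideanSpace ℝ ι) :
    dist x y ^ 2 = ∑ i, (x i - y i) ^ 2 := by
  rw [EuclideanSpace.dist_eq, Real.sq_sqrt]
  · congr 1; ext i; rw [Real.dist_eq, sq_abs]
  · positivity

lemma sep_card_le {a : ι → ℝ} {s : ℝ} (hs : 0 < s) (ha : ∀ i, s ≤ a i)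
    (F : Finset (EuclideanSpace ℝ ι))
    (hF : ∀ x ∈ F, ∑ i, (x i) ^ 2 / (a i) ^ 2 ≤ 1)
    (hsep : ∀ x ∈ F, ∀ y ∈ F, x ≠ y → s < dist x y) :
    (F.card : ℝ) ≤ ∏ i, (4 * a i / s) := by
  classical
  have hapos : ∀ i, 0 < a i := fun i => lt_of_lt_of_le hs (ha i)
  set μ : Measure (EuclideanSpace ℝ ι) := volume with hμ
  have hdisj : (↑F : Set (EuclideanSpace ℝ ι)).PairwiseDisjoint
      (fun y => closedBall y (s / 2)) := by
    intro x hx y hy hxy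
    exact closedBall_disjoint_closedBall (by linarith [hsep x hx y hy hxy])
  have hsub : (⋃ y ∈ F, closedBall y (s / 2)) ⊆
      (diagMap (fun i => 2 * a i)) '' (closedBall 0 1) := by
    intro z hz
    simp only [Set.mem_iUnion] at hz
    obtain ⟨y, hy, hzy⟩ := hz
    refine ⟨WithLp.toLp 2 (fun i => z i / (2 * a i)), ?_, (WithLp.ext_iff 2).2 (funext fun i => ?_)⟩
    · rw [mem_closedBall, dist_zero_right, EuclideanSpace.norm_eq]
      rw [show (1:ℝ) = Real.sqrt 1 by simp]
      apply Real.sqrt_le_sqrt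
      have hzy' : ∑ i, (z i - y i) ^ 2 ≤ (s / 2) ^ 2 := by
        rw [← eucl_dist_sq]
        exact pow_le_pow_left₀ dist_nonneg (mem_closedBall.1 hzy) 2
      have hy' := hF y hy
      have key : ∀ i, ‖z i / (2 * a i)‖ ^ 2
          ≤ (1 / 2) * ((y i) ^ 2 / (a i) ^ 2) + (1 / 2) * ((z i - y i) ^ 2 / s ^ 2) := by
        intro i
        have h3 : ‖z i / (2 * a i)‖ ^ 2 = (z i) ^ 2 / (4 * (a i) ^ 2) := by
          rw [Real.norm_eq_abs, sq_abs, div_pow]; congr 1; ring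
        rw [h3]
        calc (z i) ^ 2 / (4 * (a i) ^ 2)
            ≤ (2 * (y i) ^ 2 + 2 * (z i - y i) ^ 2) / (4 * (a i) ^ 2) := by
              gcongr
              nlinarith [sq_nonneg (z i - 2 * y i)]
          _ = (1 / 2) * ((y i) ^ 2 / (a i) ^ 2) + (1 / 2) * ((z i - y i) ^ 2 / (a i) ^ 2) := by
              field_simp; ring
          _ ≤ (1 / 2) * ((y i) ^ 2 / (a i) ^ 2) + (1 / 2) * ((z i - y i) ^ 2 / s ^ 2) := by
              have h2 : (z i - y i) ^ 2 / (a i) ^ 2 ≤ (z i - y i) ^ 2 / s ^ 2 :=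
                div_le_div_of_nonneg_left (sq_nonneg _) (by positivity)
                  (pow_le_pow_left₀ hs.le (ha i) 2)
              nlinarith [h2]
      calc ∑ i, ‖z i / (2 * a i)‖ ^ 2
          ≤ ∑ i, ((1 / 2) * ((y i) ^ 2 / (a i) ^ 2) + (1 / 2) * ((z i - y i) ^ 2 / s ^ 2)) :=
            Finset.sum_le_sum fun i _ => key i
        _ = (1 / 2) * (∑ i, (y i) ^ 2 / (a i) ^ 2) + (1 / 2) * ((∑ i, (z i - y i) ^ 2) / s ^ 2) := by
            rw [Finset.sum_add_distrib, ← Finset.mul_sum, ← Finset.mul_sum, ← Finset.sum_div]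
        _ ≤ (1 / 2) * 1 + (1 / 2) * ((s / 2) ^ 2 / s ^ 2) := by gcongr
        _ ≤ 1 := by
            have h4 : (s / 2) ^ 2 / s ^ 2 = 1 / 4 := by
              rw [div_pow]; rw [div_div]; rw [div_eq_div_iff (by positivity) (by norm_num)] <;> ring_nf
            rw [h4]; norm_num
    · show (2 * a i) * (z i / (2 * a i)) = z i
      rw [mul_comm (2 * a i) (z i / (2 * a i)), div_mul_cancel₀]
      exact (by nlinarith [hapos i] : (0:ℝ) < 2 * a i).ne'
  -- measure computation
  have hmeas : ∀ y : EuclideanSpace ℝ ι, MeasurableSet (closedBall y (s / 2)) :=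
    fun y => measurableSet_closedBall
  have hsum := measure_biUnion_finset (μ := μ) hdisj (fun b _ => hmeas b)
  have hcb : ∀ y : EuclideanSpace ℝ ι,
      μ (closedBall y (s / 2)) = ENNReal.ofReal ((s / 2) ^ Fintype.card ι) * μ (closedBall 0 1) := by
    intro y
    rw [hμ, Measure.addHaar_closedBall' volume y (by linarith : (0:ℝ) ≤ s / 2), finrank_euclideanSpace]
  have himg : μ ((diagMap (fun i => 2 * a i)) '' (closedBall 0 1))
      = ENNReal.ofReal (∏ i, (2 * a i)) * μ (closedBall 0 1) := by
    rw [hμ, Measure.addHaar_image_linearMap, diagMap_det]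
    congr 2
    rw [abs_of_nonneg]
    exact Finset.prod_nonneg fun i _ => by nlinarith [hapos i]
  have hineq : (F.card : ENNReal) * (ENNReal.ofReal ((s / 2) ^ Fintype.card ι) * μ (closedBall 0 1))
      ≤ ENNReal.ofReal (∏ i, (2 * a i)) * μ (closedBall 0 1) := by
    rw [← himg]
    calc (F.card : ENNReal) * (ENNReal.ofReal ((s / 2) ^ Fintype.card ι) * μ (closedBall 0 1))
        = ∑ y ∈ F, μ (closedBall y (s / 2)) := by
          rw [Finset.sum_congr rfl (fun y _ => hcb y), Finset.sum_const, nsmul_eq_mul]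
      _ = μ (⋃ y ∈ F, closedBall y (s / 2)) := hsum.symm
      _ ≤ _ := measure_mono hsub
  have hB0 : μ (closedBall (0 : EuclideanSpace ℝ ι) 1) ≠ 0 :=
    (measure_closedBall_pos μ 0 one_pos).ne'
  have hBt : μ (closedBall (0 : EuclideanSpace ℝ ι) 1) ≠ ⊤ :=
    measure_closedBall_lt_top.ne
  rw [← mul_assoc, ENNReal.mul_le_mul_iff_left hB0 hBt] at hineq
  have hcast : (F.card : ENNReal) = ENNReal.ofReal (F.card : ℝ) := by
    simp [ENNReal.ofReal_natCast]
  rw [hcast, ← ENNReal.ofReal_mul (by positivity)] at hineq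
  have hreal : (F.card : ℝ) * (s / 2) ^ Fintype.card ι ≤ ∏ i, (2 * a i) :=
    (ENNReal.ofReal_le_ofReal_iff (Finset.prod_nonneg fun i _ => by nlinarith [hapos i])).1 hineq
  have hs' : s ≠ 0 := hs.ne'
  have hprod : ∏ i, (4 * a i / s) = (∏ i, (2 * a i)) / (s / 2) ^ Fintype.card ι := by
    rw [← Finset.card_univ, ← Finset.prod_const (s / 2), ← Finset.prod_div_distrib]
    exact Finset.prod_congr rfl fun i _ => by field_simp; ring
  rw [hprod, le_div_iff₀ (pow_pos (by linarith) _)]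
  exact hreal

lemma ellipsoid_net {a : ι → ℝ} {s : ℝ} (hs : 0 < s) (ha : ∀ i, s ≤ a i) :
    ∃ S : Finset (EuclideanSpace ℝ ι),
      ((S.card : ℝ) ≤ ∏ i, (4 * a i / s)) ∧
      ∀ x : EuclideanSpace ℝ ι, (∑ i, (x i) ^ 2 / (a i) ^ 2 ≤ 1) →
        ∃ y ∈ S, dist x y ≤ s := by
  classical
  set P : ℕ → Prop := fun m => ∃ F : Finset (EuclideanSpace ℝ ι),
    (∀ x ∈ F, ∑ i, (x i) ^ 2 / (a i) ^ 2 ≤ 1) ∧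
    (∀ x ∈ F, ∀ y ∈ F, x ≠ y → s < dist x y) ∧ F.card = m with hP
  have hP0 : P 0 := ⟨∅, by simp, by simp, rfl⟩
  set M : ℕ := ⌊∏ i, (4 * a i / s)⌋₊ with hM
  have hbound : ∀ m, P m → m ≤ M := by
    rintro m ⟨F, h1, h2, h3⟩
    exact h3 ▸ Nat.le_floor (sep_card_le hs ha F h1 h2)
  have hm₀ : P (Nat.findGreatest P M) :=
    Nat.findGreatest_spec (Nat.zero_le M) hP0
  obtain ⟨F, hF1, hF2, hF3⟩ := hm₀
  refine ⟨F, sep_card_le hs ha F hF1 hF2, ?_⟩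
  intro x hx
  by_contra hcon
  push_neg at hcon
  have hxF : x ∉ F := by
    intro hxF
    have := hcon x hxF
    simp at this
    linarith
  have hP' : P (Nat.findGreatest P M + 1) := by
    refine ⟨insert x F, ?_, ?_, ?_⟩
    · intro z hz
      rcases Finset.mem_insert.1 hz with h | h
      · exact h ▸ hx
      · exact hF1 z h
    · intro z hz w hw hzw
      rcases Finset.mem_insert.1 hz with h | h <;>
        rcases Finset.mem_insert.1 hw with h' | h'
      · exact absurd (h.trans h'.symm) hzw
      · exact h ▸ hcon w h'
      · rw [dist_comm]; exact h' ▸ hcon z h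
      · exact hF2 z h w h' hzw
    · rw [Finset.card_insert_of_notMem hxF, hF3]
  exact Nat.findGreatest_is_greatest (Nat.lt_succ_self _) (hbound _ hP') hP'

set_option maxHeartbeats 2000000 in
lemma per_n (n : ℕ) {A : Matrix (Fin n) (Fin n) ℝ} (hA : A.IsSymm) {ε : ℝ} (hε : 0 < ε) :
    ∃ Dn : Finset (Fin n → ℝ),
      (∀ v : Fin n → ℝ, (∀ j, v j ∈ Set.Icc (0:ℝ) 1) →
        ∃ w ∈ Dn, Real.sqrt (∑ i, (A.mulVec v i - w i) ^ 2) ≤ Real.sqrt n * ε) ∧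
      1 ≤ Dn.card ∧
      Real.log Dn.card ≤ Real.log 2 + 16 * Matrix.trace (A * A) / ε ^ 2 := by
  classical
  rcases Nat.eq_zero_or_pos n with hn | hn
  · subst hn
    refine ⟨{fun _ => 0}, ?_, by simp, ?_⟩
    · intro v _
      refine ⟨fun _ => 0, Finset.mem_singleton_self _, ?_⟩
      simp
    · have htr : Matrix.trace (A * A) = 0 := by
        simp [Matrix.trace]
      rw [htr]
      norm_num
      exact Real.log_nonneg (by norm_num)
  -- main case
  have hherm : A.IsHermitian := by
    rw [Matrix.IsHermitian, Matrix.conjTranspose_eq_transpose_of_trivial]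
    exact hA
  set μ : Fin n → ℝ := hherm.eigenvalues with hμdef
  set b := hherm.eigenvectorBasis with hbdef
  have F1 : ∀ (V : EuclideanSpace ℝ (Fin n)) (i : Fin n),
      b.repr (show EuclideanSpace ℝ (Fin n) from WithLp.toLp 2 (A.mulVec V)) i = μ i * b.repr V i := by
    intro V i
    rw [OrthonormalBasis.repr_apply_apply, OrthonormalBasis.repr_apply_apply]
    have h1 : (inner ℝ (b i) (show EuclideanSpace ℝ (Fin n) from WithLp.toLp 2 (A.mulVec V)) : ℝ)
        = dotProduct (⇑(b i)) (A.mulVec V) := by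
      simp [PiLp.inner_apply, RCLike.inner_apply, dotProduct, mul_comm]
    have h2 : (inner ℝ (b i) V : ℝ) = dotProduct (⇑(b i)) V := by
      simp [PiLp.inner_apply, RCLike.inner_apply, dotProduct, mul_comm]
    rw [h1, h2, Matrix.dotProduct_mulVec]
    have h3 : Matrix.vecMul (⇑(b i)) A = A.mulVec (⇑(b i)) := by
      conv_lhs => rw [← hA]
      exact Matrix.vecMul_transpose A (⇑(b i))
    rw [h3]
    have h4 : A.mulVec (⇑(b i)) = μ i • ⇑(b i) := hherm.mulVec_eigenvectorBasis i
    rw [h4, smul_dotProduct, smul_eq_mul]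
  have F2 : ∀ (x : EuclideanSpace ℝ (Fin n)), ∑ i, (b.repr x i) ^ 2 = ∑ j, (x j) ^ 2 := by
    intro x
    have h1 : ∑ i, (b.repr x i) ^ 2 = ‖b.repr x‖ ^ 2 := by
      rw [EuclideanSpace.norm_eq, Real.sq_sqrt (by positivity)]
      exact Finset.sum_congr rfl fun i _ => by rw [Real.norm_eq_abs, sq_abs]
    have h2 : ∑ j, (x j) ^ 2 = ‖x‖ ^ 2 := by
      rw [EuclideanSpace.norm_eq, Real.sq_sqrt (by positivity)]
      exact Finset.sum_congr rfl fun i _ => by rw [Real.norm_eq_abs, sq_abs]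
    rw [h1, h2, b.repr.norm_map]
  have hbcoord : ∀ (i j : Fin n), b.repr (show EuclideanSpace ℝ (Fin n) from WithLp.toLp 2 (Pi.single j 1)) i = b i j := by
    intro i j
    rw [OrthonormalBasis.repr_apply_apply]
    simp [PiLp.inner_apply, RCLike.inner_apply, Pi.single_apply]
  have hbnorm : ∀ i : Fin n, ∑ j, (b i j) ^ 2 = 1 := by
    intro i
    have h1 : ‖b i‖ = 1 := b.orthonormal.1 i
    have h2 : ∑ j, (b i j) ^ 2 = ‖b i‖ ^ 2 := by
      rw [EuclideanSpace.norm_eq, Real.sq_sqrt (by positivity)]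
      exact Finset.sum_congr rfl fun j _ => by rw [Real.norm_eq_abs, sq_abs]
    rw [h2, h1, one_pow]
  have F3 : Matrix.trace (A * A) = ∑ i, (μ i) ^ 2 := by
    have h1 : Matrix.trace (A * A) = ∑ i, ∑ j, (A i j) ^ 2 := by
      rw [Matrix.trace]
      refine Finset.sum_congr rfl fun i _ => ?_
      rw [Matrix.diag_apply, Matrix.mul_apply]
      exact Finset.sum_congr rfl fun j _ => by rw [hA.apply i j, sq]
    rw [h1, Finset.sum_comm]
    have h2 : ∀ j, ∑ i, (A i j) ^ 2 = ∑ i, (μ i) ^ 2 * (b.repr (show EuclideanSpace ℝ (Fin n) from WithLp.toLp 2 (Pi.single j 1)) i) ^ 2 := by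
      intro j
      have h3 : ∀ i, A i j = A.mulVec (Pi.single j 1) i := by
        intro i; rw [Matrix.mulVec_single]; simp
      calc ∑ i, (A i j) ^ 2 = ∑ i, (A.mulVec (Pi.single j 1) i) ^ 2 :=
            Finset.sum_congr rfl fun i _ => by rw [h3]
        _ = ∑ i, (b.repr (show EuclideanSpace ℝ (Fin n) from WithLp.toLp 2 (A.mulVec (Pi.single j 1))) i) ^ 2 :=
            (F2 (WithLp.toLp 2 (A.mulVec (Pi.single j 1)))).symm
        _ = ∑ i, (μ i) ^ 2 * (b.repr (show EuclideanSpace ℝ (Fin n) from WithLp.toLp 2 (Pi.single j 1)) i) ^ 2 := by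
            refine Finset.sum_congr rfl fun i _ => ?_
            rw [F1 (show EuclideanSpace ℝ (Fin n) from WithLp.toLp 2 (Pi.single j 1)) i, mul_pow]
    calc ∑ j, ∑ i, (A i j) ^ 2
        = ∑ j, ∑ i, (μ i) ^ 2 * (b.repr (show EuclideanSpace ℝ (Fin n) from WithLp.toLp 2 (Pi.single j 1)) i) ^ 2 :=
          Finset.sum_congr rfl fun j _ => h2 j
      _ = ∑ i, (μ i) ^ 2 * (∑ j, (b.repr (show EuclideanSpace ℝ (Fin n) from WithLp.toLp 2 (Pi.single j 1)) i) ^ 2) := by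
          rw [Finset.sum_comm]
          exact Finset.sum_congr rfl fun i _ => by rw [Finset.mul_sum]
      _ = ∑ i, (μ i) ^ 2 := by
          refine Finset.sum_congr rfl fun i _ => ?_
          have : ∑ j, (b.repr (show EuclideanSpace ℝ (Fin n) from WithLp.toLp 2 (Pi.single j 1)) i) ^ 2 = ∑ j, (b i j) ^ 2 :=
            Finset.sum_congr rfl fun j _ => by rw [hbcoord i j]
          rw [this, hbnorm i, mul_one]
  -- construction
  set big : Finset (Fin n) := Finset.univ.filter (fun i => ε / 2 < |μ i|) with hbig
  have hμbig : ∀ i : {x // x ∈ big}, ε / 2 < |μ i.1| := by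
    intro i
    exact (Finset.mem_filter.1 i.2).2
  have hn' : (0:ℝ) < n := by exact_mod_cast hn
  have hsqrtn : (0:ℝ) < Real.sqrt n := Real.sqrt_pos.2 hn'
  set s : ℝ := ε * Real.sqrt n / 2 with hsdef
  have hs : 0 < s := by positivity
  set a : {x // x ∈ big} → ℝ := fun i => |μ i.1| * Real.sqrt n with hadef
  have ha : ∀ i, s ≤ a i := by
    intro i
    calc s = (ε / 2) * Real.sqrt n := by rw [hsdef]; ring
      _ ≤ |μ i.1| * Real.sqrt n :=
          mul_le_mul_of_nonneg_right (le_of_lt (hμbig i)) hsqrtn.le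
  obtain ⟨S, hScard, hSnet⟩ := ellipsoid_net (ι := {x // x ∈ big}) hs ha
  set ey : EuclideanSpace ℝ {x // x ∈ big} → EuclideanSpace ℝ (Fin n) :=
    fun y => WithLp.toLp 2 (fun i => if h : i ∈ big then y ⟨i, h⟩ else 0) with heydef
  set embed : EuclideanSpace ℝ {x // x ∈ big} → (Fin n → ℝ) :=
    fun y => (b.repr.symm (ey y) : EuclideanSpace ℝ (Fin n)) with hembdef
  set Dn : Finset (Fin n → ℝ) := insert (fun _ => 0) (S.image embed) with hDn
  have hone : 1 ≤ Dn.card := by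
    rw [hDn]
    exact Finset.card_pos.2 ⟨_, Finset.mem_insert_self _ _⟩
  refine ⟨Dn, ?_, hone, ?_⟩
  · -- net property
    intro v hv
    set V : EuclideanSpace ℝ (Fin n) := WithLp.toLp 2 v with hV
    set c : Fin n → ℝ := fun i => b.repr V i with hc
    have hcsum : ∑ i, (c i) ^ 2 ≤ (n:ℝ) := by
      have h1 : ∑ i, (c i) ^ 2 = ∑ j, (v j) ^ 2 := F2 V
      have h2 : ∑ j, (v j) ^ 2 ≤ ∑ _j : Fin n, (1:ℝ) :=
        Finset.sum_le_sum fun j _ => by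
          have := hv j
          nlinarith [this.1, this.2]
      rw [h1]
      simpa using h2
    set x : EuclideanSpace ℝ {x // x ∈ big} := WithLp.toLp 2 (fun i => μ i.1 * c i.1) with hx
    have hxell : ∑ i, (x i) ^ 2 / (a i) ^ 2 ≤ 1 := by
      have heq : ∀ i : {x // x ∈ big}, (x i) ^ 2 / (a i) ^ 2 = (c i.1) ^ 2 / n := by
        intro i
        have hμne : μ i.1 ≠ 0 := by
          have := hμbig i
          intro h
          rw [h, abs_zero] at this
          linarith
        rw [hx, hadef]
        rw [mul_pow, mul_pow, Real.sq_sqrt hn'.le, sq_abs]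
        exact mul_div_mul_left _ _ (pow_ne_zero 2 hμne)
      calc ∑ i, (x i) ^ 2 / (a i) ^ 2 = ∑ i : {x // x ∈ big}, (c i.1) ^ 2 / n :=
            Finset.sum_congr rfl fun i _ => heq i
        _ = (∑ i ∈ big, (c i) ^ 2) / n := by
            rw [Finset.sum_div]
            exact Finset.sum_attach big (fun i => (c i) ^ 2 / n)
        _ ≤ (∑ i, (c i) ^ 2) / n := by
            apply (div_le_div_iff_of_pos_right hn').2
            exact Finset.sum_le_sum_of_subset_of_nonneg (Finset.filter_subset _ _)
              (fun i _ _ => sq_nonneg _)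
        _ ≤ 1 := by
            rw [div_le_one hn']
            exact hcsum
    obtain ⟨y, hyS, hxy⟩ := hSnet x hxell
    refine ⟨embed y, by
      rw [hDn]
      exact Finset.mem_insert_of_mem (Finset.mem_image_of_mem _ hyS), ?_⟩
    set W : EuclideanSpace ℝ (Fin n) := b.repr.symm (ey y) with hWdef
    have hWr : b.repr W = ey y := b.repr.apply_symm_apply (ey y)
    set AV : EuclideanSpace ℝ (Fin n) := (show EuclideanSpace ℝ (Fin n) from WithLp.toLp 2 (A.mulVec V)) with hAVdef
    have key : ∑ j, (A.mulVec v j - embed y j) ^ 2 = ∑ i, (b.repr AV i - ey y i) ^ 2 := by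
      calc ∑ j, (A.mulVec v j - embed y j) ^ 2 = ∑ j, ((AV - W) j) ^ 2 := by
            refine Finset.sum_congr rfl fun j _ => ?_
            rw [PiLp.sub_apply]
        _ = ∑ i, (b.repr (AV - W) i) ^ 2 := (F2 _).symm
        _ = ∑ i, (b.repr AV i - ey y i) ^ 2 := by
            refine Finset.sum_congr rfl fun i _ => ?_
            rw [map_sub, PiLp.sub_apply, hWr]
    rw [key]
    have hAVi : ∀ i, b.repr AV i = μ i * c i := fun i => F1 V i
    have hsplit := Finset.sum_filter_add_sum_filter_not Finset.univ (fun i => i ∈ big)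
      (fun i => (b.repr AV i - ey y i) ^ 2)
    have hfilterbig : Finset.univ.filter (fun i => i ∈ big) = big := by
      ext i; simp
    have hBigpart : ∑ i ∈ Finset.univ.filter (fun i => i ∈ big), (b.repr AV i - ey y i) ^ 2
        ≤ s ^ 2 := by
      rw [hfilterbig]
      have h1 : ∑ i ∈ big, (b.repr AV i - ey y i) ^ 2 = ∑ i : {x // x ∈ big}, (x i - y i) ^ 2 := by
        rw [← Finset.sum_attach big (fun i => (b.repr AV i - ey y i) ^ 2)]
        refine Finset.sum_congr rfl fun i _ => ?_
        rw [hAVi]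
        have h2 : ey y i.1 = y i := by
          rw [heydef]
          exact dif_pos i.2
        rw [h2]
      rw [h1, ← eucl_dist_sq]
      exact pow_le_pow_left₀ dist_nonneg hxy 2
    have hSmallpart : ∑ i ∈ Finset.univ.filter (fun i => ¬ i ∈ big), (b.repr AV i - ey y i) ^ 2
        ≤ (ε / 2) ^ 2 * n := by
      have h1 : ∀ i ∈ Finset.univ.filter (fun i => ¬ i ∈ big),
          (b.repr AV i - ey y i) ^ 2 ≤ (ε / 2) ^ 2 * (c i) ^ 2 := by
        intro i hi
        rw [Finset.mem_filter] at hi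
        have hnotbig : ¬ (ε / 2 < |μ i|) := by
          intro hcon
          exact hi.2 (by rw [hbig]; exact Finset.mem_filter.2 ⟨Finset.mem_univ _, hcon⟩)
        push_neg at hnotbig
        have h2 : ey y i = 0 := by
          rw [heydef]
          exact dif_neg hi.2
        rw [hAVi, h2, sub_zero, mul_pow]
        have h3 : (μ i) ^ 2 ≤ (ε / 2) ^ 2 := by
          rw [← sq_abs (μ i)]
          exact pow_le_pow_left₀ (abs_nonneg _) hnotbig 2
        exact mul_le_mul_of_nonneg_right h3 (sq_nonneg _)
      calc ∑ i ∈ Finset.univ.filter (fun i => ¬ i ∈ big), (b.repr AV i - ey y i) ^ 2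
          ≤ ∑ i ∈ Finset.univ.filter (fun i => ¬ i ∈ big), (ε / 2) ^ 2 * (c i) ^ 2 :=
            Finset.sum_le_sum h1
        _ ≤ ∑ i, (ε / 2) ^ 2 * (c i) ^ 2 :=
            Finset.sum_le_sum_of_subset_of_nonneg (Finset.filter_subset _ _)
              (fun i _ _ => by positivity)
        _ = (ε / 2) ^ 2 * ∑ i, (c i) ^ 2 := by rw [← Finset.mul_sum]
        _ ≤ (ε / 2) ^ 2 * n := mul_le_mul_of_nonneg_left hcsum (by positivity)
    have htotal : ∑ i, (b.repr AV i - ey y i) ^ 2 ≤ (Real.sqrt n * ε) ^ 2 := by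
      have hssq : s ^ 2 = ε ^ 2 * n / 4 := by
        rw [hsdef, div_pow, mul_pow, Real.sq_sqrt hn'.le]
        norm_num
      have hrhs : (Real.sqrt n * ε) ^ 2 = n * ε ^ 2 := by
        rw [mul_pow, Real.sq_sqrt hn'.le]
      rw [← hsplit, hrhs]
      have := hBigpart
      have := hSmallpart
      nlinarith [hε, hn', sq_nonneg ε]
    calc Real.sqrt (∑ i, (b.repr AV i - ey y i) ^ 2)
        ≤ Real.sqrt ((Real.sqrt n * ε) ^ 2) := Real.sqrt_le_sqrt htotal
      _ = Real.sqrt n * ε := Real.sqrt_sq (by positivity)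
  · -- log card bound
    have hfac : ∀ i : {x // x ∈ big}, (4 * a i / s) = 8 * |μ i.1| / ε := by
      intro i
      show 4 * (|μ i.1| * Real.sqrt n) / (ε * Real.sqrt n / 2) = 8 * |μ i.1| / ε
      rw [div_eq_div_iff (by positivity) hε.ne']
      ring
    have hfac4 : ∀ i : {x // x ∈ big}, (4:ℝ) ≤ 8 * |μ i.1| / ε := by
      intro i
      rw [le_div_iff₀ hε]
      have h0 := hμbig i
      linarith
    have hprod1 : (1:ℝ) ≤ ∏ i : {x // x ∈ big}, (8 * |μ i.1| / ε) := by
      have h := Finset.prod_le_prod (s := Finset.univ) (f := fun _ : {x // x ∈ big} => (1:ℝ))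
        (g := fun i : {x // x ∈ big} => 8 * |μ i.1| / ε)
        (by intro i _; norm_num) (by intro i _; linarith [hfac4 i])
      simpa using h
    have hScard' : (S.card : ℝ) ≤ ∏ i : {x // x ∈ big}, (8 * |μ i.1| / ε) := by
      rw [← Finset.prod_congr rfl fun i _ => hfac i]
      exact hScard
    have hcard2 : (Dn.card : ℝ) ≤ 2 * ∏ i : {x // x ∈ big}, (8 * |μ i.1| / ε) := by
      have h1 : Dn.card ≤ S.card + 1 := by
        rw [hDn]
        exact le_trans (Finset.card_insert_le _ _) (Nat.succ_le_succ Finset.card_image_le)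
      have h2 : (Dn.card : ℝ) ≤ (S.card : ℝ) + 1 := by exact_mod_cast h1
      linarith
    have hDpos : (0:ℝ) < Dn.card := by
      have : (1:ℝ) ≤ Dn.card := by exact_mod_cast hone
      linarith
    calc Real.log Dn.card ≤ Real.log (2 * ∏ i : {x // x ∈ big}, (8 * |μ i.1| / ε)) :=
          Real.log_le_log hDpos hcard2
      _ = Real.log 2 + Real.log (∏ i : {x // x ∈ big}, (8 * |μ i.1| / ε)) :=
          Real.log_mul two_ne_zero (by linarith)
      _ ≤ Real.log 2 + 16 * Matrix.trace (A * A) / ε ^ 2 := by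
          have hlogprod : Real.log (∏ i : {x // x ∈ big}, (8 * |μ i.1| / ε)) = ∑ i : {x // x ∈ big}, Real.log (8 * |μ i.1| / ε) :=
            Real.log_prod (fun i _ => by linarith [hfac4 i])
          have hterm : ∀ i : {x // x ∈ big}, Real.log (8 * |μ i.1| / ε) ≤ 16 * (μ i.1) ^ 2 / ε ^ 2 := by
            intro i
            have h1 : Real.log (8 * |μ i.1| / ε) ≤ 8 * |μ i.1| / ε - 1 :=
              Real.log_le_sub_one_of_pos (by linarith [hfac4 i])
            have h2 : 8 * |μ i.1| / ε ≤ 16 * (μ i.1) ^ 2 / ε ^ 2 := by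
              rw [div_le_div_iff₀ hε (by positivity)]
              have h5 := hμbig i
              have habs : ε ≤ 2 * |μ i.1| := by linarith
              have h6 : (ε * |μ i.1|) * ε ≤ (ε * |μ i.1|) * (2 * |μ i.1|) :=
                mul_le_mul_of_nonneg_left habs (mul_nonneg hε.le (abs_nonneg _))
              have h7 : |μ i.1| * |μ i.1| = (μ i.1) ^ 2 := by
                rw [← sq_abs (μ i.1)]; ring
              nlinarith [h6, h7]
            linarith
          have hsum2 : ∑ i : {x // x ∈ big}, 16 * (μ i.1) ^ 2 / ε ^ 2
              ≤ 16 * Matrix.trace (A * A) / ε ^ 2 := by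
            rw [F3]
            have e1 : ∑ i : {x // x ∈ big}, 16 * (μ i.1) ^ 2 / ε ^ 2
                = (∑ i ∈ big, (μ i) ^ 2) * (16 / ε ^ 2) := by
              rw [Finset.sum_mul, ← Finset.sum_attach big (fun i => (μ i) ^ 2 * (16 / ε ^ 2))]
              exact Finset.sum_congr rfl fun i _ => by ring
            have e2 : 16 * (∑ i, (μ i) ^ 2) / ε ^ 2 = (∑ i, (μ i) ^ 2) * (16 / ε ^ 2) := by
              ring
            rw [e1, e2]
            apply mul_le_mul_of_nonneg_right ?_ (by positivity)
            exact Finset.sum_le_sum_of_subset_of_nonneg (Finset.filter_subset _ _)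
              (fun i _ _ => sq_nonneg _)
          have h3 := hlogprod ▸ (Finset.sum_le_sum fun i _ => hterm i)
          linarith [h3, hsum2]


end aux

def meanFieldAssumption (A : (n : ℕ) → Matrix (Fin n) (Fin n) ℝ) : Prop :=
  (∃ C : ℝ, ∀ n : ℕ, ∀ x : Fin n → ℝ, (∀ j, x j ∈ Set.Icc (0:ℝ) 1) →
      ∑ i, |∑ j, A n i j * x j| ≤ C * n) ∧
  Tendsto (fun n : ℕ => Matrix.trace (A n * A n) / n) atTop (nhds 0)

theorem net_lemma
    (A : (n : ℕ) → Matrix (Fin n) (Fin n) ℝ) (hsymm : ∀ n, (A n).IsSymm)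
    (hMF : meanFieldAssumption A) (ε : ℝ) (hε : 0 < ε) :
    ∃ D : (n : ℕ) → Finset (Fin n → ℝ),
      (∀ n : ℕ, ∀ v : Fin n → ℝ, (∀ j, v j ∈ Set.Icc (0:ℝ) 1) →
        ∃ w ∈ D n,
          Real.sqrt (∑ i, ((A n).mulVec v i - w i) ^ 2) ≤ Real.sqrt n * ε) ∧
      Tendsto (fun n : ℕ => Real.log ((D n).card) / n) atTop (nhds 0) := by
  classical
  choose D hnet hcard hlog using fun n => per_n n (hsymm n) hε
  refine ⟨D, fun n => hnet n, ?_⟩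
  have h0 : ∀ n : ℕ, 0 ≤ Real.log ((D n).card) / n := by
    intro n
    apply div_nonneg _ (Nat.cast_nonneg n)
    apply Real.log_nonneg
    exact_mod_cast hcard n
  have hup : ∀ n : ℕ, Real.log ((D n).card) / n
      ≤ Real.log 2 / n + (16 / ε ^ 2) * (Matrix.trace (A n * A n) / n) := by
    intro n
    rcases eq_or_ne n 0 with h | h
    · subst h; simp
    · have hn : (0:ℝ) < n := by exact_mod_cast Nat.pos_of_ne_zero h
      have h1 := hlog n
      have h2 : Real.log ((D n).card) / n
          ≤ (Real.log 2 + 16 * Matrix.trace (A n * A n) / ε ^ 2) / n :=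
        (div_le_div_iff_of_pos_right hn).2 h1
      have h3 : (Real.log 2 + 16 * Matrix.trace (A n * A n) / ε ^ 2) / n
          = Real.log 2 / n + (16 / ε ^ 2) * (Matrix.trace (A n * A n) / n) := by
        field_simp
      rw [h3] at h2
      exact h2
  have hg : Tendsto (fun n : ℕ =>
      Real.log 2 / n + (16 / ε ^ 2) * (Matrix.trace (A n * A n) / n)) atTop (nhds 0) := by
    have t1 := tendsto_const_div_atTop_nhds_zero_nat (Real.log 2)
    have t2 := (hMF.2).const_mul (16 / ε ^ 2)
    simpa using t1.add t2
  exact squeeze_zero h0 hup hg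
end

section
/- Let p ∈ (0,1) and β ∈ ℝ with β²·p·(1−p) ≤ 1. Then σ = 0 is the only real solution of the equation σ = tanh(β·(1−p)·tanh(β·p·σ)). -/
open Real

lemma tanh_pos_aux {x : ℝ} (hx : 0 < x) : 0 < Real.tanh x := by
  rw [Real.tanh_eq_sinh_div_cosh]
  exact div_pos (Real.sinh_pos_iff.2 hx) (Real.cosh_pos x)

lemma tanh_lt_self_aux {x : ℝ} (hx : 0 < x) : Real.tanh x < x := by
  rw [Real.tanh_eq_sinh_div_cosh, div_lt_iff₀ (Real.cosh_pos x)]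
  have key : StrictMonoOn (fun y : ℝ => y * Real.cosh y - Real.sinh y) (Set.Ici 0) := by
    refine strictMonoOn_of_deriv_pos (convex_Ici _) ?_ fun y hy => ?_
    · exact ((continuous_id.mul Real.continuous_cosh).sub Real.continuous_sinh).continuousOn
    · rw [interior_Ici] at hy
      have h : HasDerivAt (fun y : ℝ => y * Real.cosh y - Real.sinh y)
          (1 * Real.cosh y + y * Real.sinh y - Real.cosh y) y :=
        ((hasDerivAt_id y).mul (Real.hasDerivAt_cosh y)).sub (Real.hasDerivAt_sinh y)
      rw [h.deriv]
      have := mul_pos (Set.mem_Ioi.1 hy) (Real.sinh_pos_iff.2 hy)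
      linarith
  have h0 := key (Set.self_mem_Ici) (Set.mem_Ici.2 hx.le) hx
  simp only [zero_mul, Real.sinh_zero, sub_zero, zero_sub] at h0
  linarith

lemma abs_tanh_lt_abs {x : ℝ} (hx : x ≠ 0) : |Real.tanh x| < |x| := by
  rcases hx.lt_or_gt with h | h
  · have h1 := tanh_lt_self_aux (neg_pos.2 h)
    have h2 := tanh_pos_aux (neg_pos.2 h)
    rw [Real.tanh_neg] at h1 h2
    rw [abs_of_neg h, abs_of_neg (by linarith : Real.tanh x < 0)]
    linarith
  · have h1 := tanh_lt_self_aux h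
    have h2 := tanh_pos_aux h
    rw [abs_of_pos h, abs_of_pos h2]
    exact h1

lemma abs_tanh_le_abs (x : ℝ) : |Real.tanh x| ≤ |x| := by
  rcases eq_or_ne x 0 with rfl | h
  · simp [Real.tanh_zero]
  · exact (abs_tanh_lt_abs h).le

theorem fixed_point_subcritical (p β : ℝ) (hp : p ∈ Set.Ioo (0 : ℝ) 1)
    (hβ : β ^ 2 * p * (1 - p) ≤ 1) :
    {σ : ℝ | σ = Real.tanh (β * (1 - p) * Real.tanh (β * p * σ))} = {0} := by
  obtain ⟨hp0, hp1⟩ := hp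
  ext σ
  simp only [Set.mem_setOf_eq, Set.mem_singleton_iff]
  constructor
  · intro hσ
    by_contra hne
    rcases eq_or_ne β 0 with rfl | hb
    · simp [Real.tanh_zero] at hσ; exact hne hσ
    · have hin : β * p * σ ≠ 0 := by
        exact mul_ne_zero (mul_ne_zero hb hp0.ne') hne
      have h1 : |Real.tanh (β * p * σ)| < |β * p * σ| := abs_tanh_lt_abs hin
      have h2 : |σ| ≤ |β * (1 - p) * Real.tanh (β * p * σ)| := by
        have := abs_tanh_le_abs (β * (1 - p) * Real.tanh (β * p * σ))
        rwa [← hσ] at this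
      have h3 : |β * (1 - p) * Real.tanh (β * p * σ)|
          < |β * (1 - p)| * |β * p * σ| := by
        rw [abs_mul]
        refine mul_lt_mul_of_pos_left h1 ?_
        rw [abs_pos]
        exact mul_ne_zero hb (by linarith)
      have h4 : |β * (1 - p)| * |β * p * σ| = (β ^ 2 * p * (1 - p)) * |σ| := by
        rw [abs_mul, abs_mul, abs_mul]
        rw [abs_of_pos hp0, abs_of_pos (by linarith : (0:ℝ) < 1 - p)]
        linear_combination (p * (1 - p) * |σ|) * sq_abs β
      have h5 : (β ^ 2 * p * (1 - p)) * |σ| ≤ 1 * |σ| :=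
        mul_le_mul_of_nonneg_right hβ (abs_nonneg _)
      rw [h4] at h3
      linarith [h2, h3, h5]
  · intro h
    subst h
    simp [Real.tanh_zero]
end
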